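/- The modified Hamster-Wheel operator | is not a distance operator: there is no pseudo-distance S = ⟨C, ≺, g⟩ on 𝒱 such that V | W = V |_S W for all V, W ⊆ 𝒱. -/
import Mathlib


/-- `lt` is a strict total order on `C`. -/
def StrictTotalOrder' {C : Type*} (lt : C → C → Prop) : Prop :=
  (∀ c, ¬ lt c c) ∧ (∀ a b c, lt a b → lt b c → lt a c) ∧
  (∀ a b, a ≠ b → lt a b ∨ lt b a)

/-- The operator induced by a pseudo-distance `⟨C, lt, d⟩`:
`V |_D W = {w ∈ W : ∃ v ∈ V, ∀ v' ∈ V, ∀ w' ∈ W, d(v,w) ⪯ d(v',w')}`. -/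
def inducedOp {𝒱 C : Type*} (lt : C → C → Prop) (d : 𝒱 → 𝒱 → C)
    (A B : Set 𝒱) : Set 𝒱 :=
  {w ∈ B | ∃ v ∈ A, ∀ v' ∈ A, ∀ w' ∈ B, lt (d v w) (d v' w') ∨ d v w = d v' w'}

/-- The elements `v 1, …, v m, w 1, …, w m` are `2m` pairwise distinct elements. -/
def hwDistinct {𝒱 : Type*} (m : ℕ) (v w : ℕ → 𝒱) : Prop :=
  (∀ i ∈ Set.Icc 1 m, ∀ j ∈ Set.Icc 1 m, v i ≠ w j) ∧
  (∀ i ∈ Set.Icc 1 m, ∀ j ∈ Set.Icc 1 m, v i = v j → i = j) ∧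
  (∀ i ∈ Set.Icc 1 m, ∀ j ∈ Set.Icc 1 m, w i = w j → i = j)

/-- `X = {v 1, …, v m, w 1, …, w m}`. -/
def hwX {𝒱 : Type*} (m : ℕ) (v w : ℕ → 𝒱) : Set 𝒱 :=
  {x | ∃ i ∈ Set.Icc 1 m, x = v i ∨ x = w i}

open Classical in
/-- The Hamster-Wheel pseudo-distance `d : 𝒱 × 𝒱 → ℝ`. -/
noncomputable def hwD {𝒱 : Type*} (m : ℕ) (v w : ℕ → 𝒱) (a b : 𝒱) : ℝ :=
  if a = b then 0
  else if ¬ (({a, b} : Set 𝒱) ⊆ hwX m v w) then 1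
  else if (∃ i ∈ Set.Icc 1 m, ∃ j ∈ Set.Icc 1 m, a = v i ∧ b = v j) ∨
      (∃ i ∈ Set.Icc 1 m, ∃ j ∈ Set.Icc 1 m, a = w i ∧ b = w j) then 1.1
  else if ∃ i ∈ Set.Icc 1 m, ({a, b} : Set 𝒱) = {v i, w i} then 1.4
  else if ∃ i ∈ Set.Icc 1 m, ∃ j ∈ Set.Icc 1 m,
      ({a, b} : Set 𝒱) = {v i, w j} ∧ ((i : ℤ) - j).natAbs ∈ ({1, m - 1} : Set ℕ) then 2
  else 1.2

open Classical in
/-- The modified Hamster-Wheel operator `|` on `𝒫(𝒱)`. -/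
noncomputable def hwOp {𝒱 : Type*} (m : ℕ) (v w : ℕ → 𝒱) (A B : Set 𝒱) : Set 𝒱 :=
  if A = ({v m, v 1} : Set 𝒱) ∧ B = ({w m, w 1} : Set 𝒱) then {w m}
  else if A = ({w m, w 1} : Set 𝒱) ∧ B = ({v m, v 1} : Set 𝒱) then {v m}
  else inducedOp (· < ·) (hwD m v w) A B

lemma mem_ind {𝒱 C : Type*} (lt : C → C → Prop) (d : 𝒱 → 𝒱 → C) (A B : Set 𝒱) (u : 𝒱) :
    u ∈ inducedOp lt d A B ↔ u ∈ B ∧ ∃ v ∈ A, ∀ v' ∈ A, ∀ w' ∈ B,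
      lt (d v u) (d v' w') ∨ d v u = d v' w' := Iff.rfl

lemma indA {𝒱 : Type*} (d : 𝒱 → 𝒱 → ℝ) (x p q : 𝒱) (hpq : p ≠ q) (h : d x p < d x q) :
    inducedOp (· < ·) d {x} ({p, q} : Set 𝒱) = {p} := by
  ext u
  simp only [mem_ind, Set.mem_insert_iff, Set.mem_singleton_iff]
  constructor
  · rintro ⟨(rfl | rfl), vv, rfl, hall⟩
    · rfl
    · exfalso
      rcases hall vv rfl p (Or.inl rfl) with h' | h' <;> linarith
  · rintro rfl
    refine ⟨Or.inl rfl, x, rfl, ?_⟩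
    rintro v' rfl w' (rfl | rfl)
    · exact Or.inr rfl
    · exact Or.inl h

lemma indB {𝒱 : Type*} (d : 𝒱 → 𝒱 → ℝ) (x y p q : 𝒱)
    (h1 : d x p ≤ d x q) (h2 : d x p ≤ d y p) (h3 : d x p ≤ d y q)
    (h4 : d y q ≤ d x p) (h5 : d y q ≤ d x q) (h6 : d y q ≤ d y p) :
    inducedOp (· < ·) d ({x, y} : Set 𝒱) ({p, q} : Set 𝒱) = {p, q} := by
  ext u
  simp only [mem_ind, Set.mem_insert_iff, Set.mem_singleton_iff]
  constructor
  · exact fun h => h.1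
  · rintro (rfl | rfl)
    · refine ⟨Or.inl rfl, x, Or.inl rfl, ?_⟩
      rintro v' (rfl | rfl) w' (rfl | rfl)
      exacts [Or.inr rfl, lt_or_eq_of_le h1, lt_or_eq_of_le h2, lt_or_eq_of_le h3]
    · refine ⟨Or.inr rfl, y, Or.inr rfl, ?_⟩
      rintro v' (rfl | rfl) w' (rfl | rfl)
      exacts [lt_or_eq_of_le h4, lt_or_eq_of_le h5, lt_or_eq_of_le h6, Or.inr rfl]

lemma hwOp_eq_induced {𝒱 : Type*} (m : ℕ) (v w : ℕ → 𝒱) (A B : Set 𝒱)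
    (hA1 : ¬(A = ({v m, v 1} : Set 𝒱) ∧ B = ({w m, w 1} : Set 𝒱)))
    (hA2 : ¬(A = ({w m, w 1} : Set 𝒱) ∧ B = ({v m, v 1} : Set 𝒱))) :
    hwOp m v w A B = inducedOp (· < ·) (hwD m v w) A B := by
  unfold hwOp
  rw [if_neg hA1, if_neg hA2]

lemma hwD_vw_eq {𝒱 : Type*} (m : ℕ) (v w : ℕ → 𝒱)
    (hvw : ∀ i ∈ Set.Icc 1 m, ∀ j ∈ Set.Icc 1 m, v i ≠ w j)
    (i : ℕ) (hi : i ∈ Set.Icc 1 m) :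
    hwD m v w (v i) (w i) = 1.4 := by
  have h1 : v i ≠ w i := hvw i hi i hi
  have hsub : ({v i, w i} : Set 𝒱) ⊆ hwX m v w := by
    intro x hx
    rcases hx with rfl | hx
    · exact ⟨i, hi, Or.inl rfl⟩
    · rw [Set.mem_singleton_iff] at hx; subst hx; exact ⟨i, hi, Or.inr rfl⟩
  have h3 : ¬((∃ a ∈ Set.Icc 1 m, ∃ b ∈ Set.Icc 1 m, v i = v a ∧ w i = v b) ∨
      (∃ a ∈ Set.Icc 1 m, ∃ b ∈ Set.Icc 1 m, v i = w a ∧ w i = w b)) := by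
    rintro (⟨a, ha, b, hb, -, h⟩ | ⟨a, ha, b, hb, h, -⟩)
    · exact hvw b hb i hi h.symm
    · exact hvw i hi a ha h
  unfold hwD
  rw [if_neg h1, if_neg (not_not_intro hsub), if_neg h3, if_pos ⟨i, hi, rfl⟩]

lemma hwD_vw_two {𝒱 : Type*} (m : ℕ) (v w : ℕ → 𝒱)
    (hvw : ∀ i ∈ Set.Icc 1 m, ∀ j ∈ Set.Icc 1 m, v i ≠ w j)
    (hvinj : ∀ i ∈ Set.Icc 1 m, ∀ j ∈ Set.Icc 1 m, v i = v j → i = j)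
    (hwinj : ∀ i ∈ Set.Icc 1 m, ∀ j ∈ Set.Icc 1 m, w i = w j → i = j)
    (i j : ℕ) (hi : i ∈ Set.Icc 1 m) (hj : j ∈ Set.Icc 1 m) (hij : i ≠ j)
    (hab : ((i : ℤ) - j).natAbs ∈ ({1, m - 1} : Set ℕ)) :
    hwD m v w (v i) (w j) = 2 := by
  have h1 : v i ≠ w j := hvw i hi j hj
  have hsub : ({v i, w j} : Set 𝒱) ⊆ hwX m v w := by
    intro x hx
    rcases hx with rfl | hx
    · exact ⟨i, hi, Or.inl rfl⟩
    · rw [Set.mem_singleton_iff] at hx; subst hx; exact ⟨j, hj, Or.inr rfl⟩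
  have h3 : ¬((∃ a ∈ Set.Icc 1 m, ∃ b ∈ Set.Icc 1 m, v i = v a ∧ w j = v b) ∨
      (∃ a ∈ Set.Icc 1 m, ∃ b ∈ Set.Icc 1 m, v i = w a ∧ w j = w b)) := by
    rintro (⟨a, ha, b, hb, -, h⟩ | ⟨a, ha, b, hb, h, -⟩)
    · exact hvw b hb j hj h.symm
    · exact hvw i hi a ha h
  have h4 : ¬ ∃ k ∈ Set.Icc 1 m, ({v i, w j} : Set 𝒱) = {v k, w k} := by
    rintro ⟨k, hk, hset⟩
    have hvi : v i ∈ ({v k, w k} : Set 𝒱) :=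
      (Set.ext_iff.mp hset (v i)).mp (Set.mem_insert _ _)
    have hwj : w j ∈ ({v k, w k} : Set 𝒱) :=
      (Set.ext_iff.mp hset (w j)).mp (Set.mem_insert_iff.mpr (Or.inr rfl))
    rcases hvi with hvi | hvi
    · have hik : i = k := hvinj i hi k hk hvi
      rcases hwj with hwj | hwj
      · exact hvw k hk j hj hwj.symm
      · rw [Set.mem_singleton_iff] at hwj
        exact hij (hik.trans (hwinj j hj k hk hwj).symm)
    · rw [Set.mem_singleton_iff] at hvi
      exact hvw i hi k hk hvi
  have h5 : ∃ a ∈ Set.Icc 1 m, ∃ b ∈ Set.Icc 1 m,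
      ({v i, w j} : Set 𝒱) = {v a, w b} ∧ ((a : ℤ) - b).natAbs ∈ ({1, m - 1} : Set ℕ) :=
    ⟨i, hi, j, hj, rfl, hab⟩
  unfold hwD
  rw [if_neg h1, if_neg (not_not_intro hsub), if_neg h3, if_neg h4, if_pos h5]

/-- The modified Hamster-Wheel operator is not a distance operator: no pseudo-distance
`⟨C, lt, g⟩` on `𝒱` induces it. -/
theorem stmt4 {𝒱 : Type*} (m : ℕ) (hm : 4 ≤ m) (v w : ℕ → 𝒱)
    (hdist : hwDistinct m v w) :
    ¬ ∃ (C : Type*) (lt : C → C → Prop) (g : 𝒱 → 𝒱 → C),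
      Nonempty C ∧ StrictTotalOrder' lt ∧
      ∀ A B : Set 𝒱, hwOp m v w A B = inducedOp lt g A B := by
  rintro ⟨C, lt, g, -, ⟨hirr, htrans, htot⟩, hop⟩
  obtain ⟨hvw, hvinj, hwinj⟩ := hdist
  have h1m : 1 ∈ Set.Icc 1 m := ⟨le_refl 1, by omega⟩
  have hmm : m ∈ Set.Icc 1 m := ⟨by omega, le_refl m⟩
  -- order helpers
  have habs : ∀ a b : C, (lt a b ∨ a = b) → lt b a → False := by
    rintro a b (h | rfl) h2
    · exact hirr _ (htrans _ _ _ h h2)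
    · exact hirr _ h2
  have hnlt : ∀ a b : C, ¬ lt a b → (lt b a ∨ b = a) := by
    intro a b h
    by_cases he : b = a
    · exact Or.inr he
    · rcases htot a b (fun hh => he hh.symm) with h' | h'
      · exact absurd h' h
      · exact Or.inl h'
  have hanti : ∀ a b : C, (lt a b ∨ a = b) → (lt b a ∨ b = a) → a = b := by
    rintro a b (h1 | h1) (h2 | h2)
    · exact absurd (htrans _ _ _ h1 h2) (hirr a)
    · exact h2.symm
    · exact h1
    · exact h1
  -- singleton extraction
  have sing : ∀ i j k : ℕ, i ∈ Set.Icc 1 m → j ∈ Set.Icc 1 m → k ∈ Set.Icc 1 m →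
      j ≠ k → hwD m v w (v i) (w j) < hwD m v w (v i) (w k) →
      lt (g (v i) (w j)) (g (v i) (w k)) := by
    intro i j k hi hj hk hjk hlt
    have hA1 : ¬(({v i} : Set 𝒱) = {v m, v 1} ∧ ({w j, w k} : Set 𝒱) = {w m, w 1}) := by
      rintro ⟨hA, -⟩
      have h1 : v m ∈ ({v i} : Set 𝒱) :=
        (Set.ext_iff.mp hA (v m)).mpr (Set.mem_insert _ _)
      have h2 : v 1 ∈ ({v i} : Set 𝒱) :=
        (Set.ext_iff.mp hA (v 1)).mpr (Set.mem_insert_iff.mpr (Or.inr rfl))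
      rw [Set.mem_singleton_iff] at h1 h2
      have := hvinj m hmm i hi h1
      have := hvinj 1 h1m i hi h2
      omega
    have hA2 : ¬(({v i} : Set 𝒱) = {w m, w 1} ∧ ({w j, w k} : Set 𝒱) = {v m, v 1}) := by
      rintro ⟨hA, -⟩
      have h1 : w m ∈ ({v i} : Set 𝒱) :=
        (Set.ext_iff.mp hA (w m)).mpr (Set.mem_insert _ _)
      rw [Set.mem_singleton_iff] at h1
      exact hvw i hi m hmm h1.symm
    have hind : inducedOp lt g {v i} ({w j, w k} : Set 𝒱) = {w j} := by
      rw [← hop, hwOp_eq_induced m v w _ _ hA1 hA2]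
      exact indA _ _ _ _ (fun h => hjk (hwinj j hj k hk h)) hlt
    by_contra hno
    have hle := hnlt _ _ hno
    have hmem : w k ∈ inducedOp lt g {v i} ({w j, w k} : Set 𝒱) := by
      refine (mem_ind _ _ _ _ _).mpr ⟨Set.mem_insert_iff.mpr (Or.inr rfl), v i, rfl, ?_⟩
      intro v' hv' w' hw'
      rw [Set.mem_singleton_iff] at hv'; subst hv'
      rcases hw' with rfl | hw'
      · exact hle
      · rw [Set.mem_singleton_iff] at hw'; subst hw'
        exact Or.inr rfl
    rw [hind, Set.mem_singleton_iff] at hmem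
    exact hjk (hwinj j hj k hk hmem.symm)
  -- chain step
  have step : ∀ i : ℕ, 1 ≤ i → i + 1 ≤ m → g (v i) (w i) = g (v (i + 1)) (w (i + 1)) := by
    intro i hi1 hi2
    have hi : i ∈ Set.Icc 1 m := ⟨hi1, by omega⟩
    have hi' : i + 1 ∈ Set.Icc 1 m := ⟨by omega, hi2⟩
    have hne : i ≠ i + 1 := by omega
    have e11 : hwD m v w (v i) (w i) = 1.4 := hwD_vw_eq m v w hvw i hi
    have e12 : hwD m v w (v i) (w (i + 1)) = 2 :=
      hwD_vw_two m v w hvw hvinj hwinj i (i + 1) hi hi' hne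
        (by simp only [Set.mem_insert_iff, Set.mem_singleton_iff]; omega)
    have e21 : hwD m v w (v (i + 1)) (w i) = 2 :=
      hwD_vw_two m v w hvw hvinj hwinj (i + 1) i hi' hi (by omega)
        (by simp only [Set.mem_insert_iff, Set.mem_singleton_iff]; omega)
    have e22 : hwD m v w (v (i + 1)) (w (i + 1)) = 1.4 := hwD_vw_eq m v w hvw (i + 1) hi'
    have F1 : lt (g (v i) (w i)) (g (v i) (w (i + 1))) :=
      sing i i (i + 1) hi hi hi' hne (by rw [e11, e12]; norm_num)
    have F2 : lt (g (v (i + 1)) (w (i + 1))) (g (v (i + 1)) (w i)) :=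
      sing (i + 1) (i + 1) i hi' hi' hi (by omega) (by rw [e22, e21]; norm_num)
    have hA1 : ¬(({v i, v (i + 1)} : Set 𝒱) = {v m, v 1} ∧
        ({w i, w (i + 1)} : Set 𝒱) = {w m, w 1}) := by
      rintro ⟨hA, -⟩
      have h1 : v 1 ∈ ({v i, v (i + 1)} : Set 𝒱) :=
        (Set.ext_iff.mp hA (v 1)).mpr (Set.mem_insert_iff.mpr (Or.inr rfl))
      have h2 : v m ∈ ({v i, v (i + 1)} : Set 𝒱) :=
        (Set.ext_iff.mp hA (v m)).mpr (Set.mem_insert _ _)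
      rcases h1 with h1 | h1
      · have := hvinj 1 h1m i hi h1
        rcases h2 with h2 | h2
        · have := hvinj m hmm i hi h2; omega
        · rw [Set.mem_singleton_iff] at h2
          have := hvinj m hmm (i + 1) hi' h2; omega
      · rw [Set.mem_singleton_iff] at h1
        have := hvinj 1 h1m (i + 1) hi' h1; omega
    have hA2 : ¬(({v i, v (i + 1)} : Set 𝒱) = {w m, w 1} ∧
        ({w i, w (i + 1)} : Set 𝒱) = {v m, v 1}) := by
      rintro ⟨hA, -⟩
      have h1 : w m ∈ ({v i, v (i + 1)} : Set 𝒱) :=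
        (Set.ext_iff.mp hA (w m)).mpr (Set.mem_insert _ _)
      rcases h1 with h1 | h1
      · exact hvw i hi m hmm h1.symm
      · rw [Set.mem_singleton_iff] at h1
        exact hvw (i + 1) hi' m hmm h1.symm
    have hset : inducedOp lt g ({v i, v (i + 1)} : Set 𝒱) ({w i, w (i + 1)} : Set 𝒱)
        = {w i, w (i + 1)} := by
      rw [← hop, hwOp_eq_induced m v w _ _ hA1 hA2]
      exact indB _ _ _ _ _ (by rw [e11, e12]; norm_num) (by rw [e11, e21]; norm_num)
        (by rw [e11, e22]) (by rw [e22, e11])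
        (by rw [e22, e12]; norm_num) (by rw [e22, e21]; norm_num)
    -- extract e ⪯ a from membership of w (i+1)
    have hmem1 : w (i + 1) ∈ inducedOp lt g ({v i, v (i + 1)} : Set 𝒱)
        ({w i, w (i + 1)} : Set 𝒱) := by
      rw [hset]; exact Set.mem_insert_iff.mpr (Or.inr rfl)
    obtain ⟨-, vv, hvv, hall⟩ := (mem_ind _ _ _ _ _).mp hmem1
    have hEA : lt (g (v (i + 1)) (w (i + 1))) (g (v i) (w i)) ∨
        g (v (i + 1)) (w (i + 1)) = g (v i) (w i) := by
      rcases hvv with rfl | hvv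
      · exact absurd F1 (fun F1' =>
          habs _ _ (hall (v i) (Set.mem_insert _ _) (w i) (Set.mem_insert _ _)) F1')
      · rw [Set.mem_singleton_iff] at hvv; subst hvv
        exact hall (v i) (Set.mem_insert _ _) (w i) (Set.mem_insert _ _)
    have hmem2 : w i ∈ inducedOp lt g ({v i, v (i + 1)} : Set 𝒱)
        ({w i, w (i + 1)} : Set 𝒱) := by
      rw [hset]; exact Set.mem_insert _ _
    obtain ⟨-, vv2, hvv2, hall2⟩ := (mem_ind _ _ _ _ _).mp hmem2
    have hAE : lt (g (v i) (w i)) (g (v (i + 1)) (w (i + 1))) ∨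
        g (v i) (w i) = g (v (i + 1)) (w (i + 1)) := by
      rcases hvv2 with rfl | hvv2
      · exact hall2 (v (i + 1)) (Set.mem_insert_iff.mpr (Or.inr rfl))
          (w (i + 1)) (Set.mem_insert_iff.mpr (Or.inr rfl))
      · rw [Set.mem_singleton_iff] at hvv2; subst hvv2
        exact absurd F2 (fun F2' =>
          habs _ _ (hall2 (v (i + 1)) (Set.mem_insert_iff.mpr (Or.inr rfl))
            (w (i + 1)) (Set.mem_insert_iff.mpr (Or.inr rfl))) F2')
    exact hanti _ _ hAE hEA
  -- chain
  have chain : ∀ i : ℕ, 1 ≤ i → i ≤ m → g (v 1) (w 1) = g (v i) (w i) := by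
    intro i
    induction i with
    | zero => omega
    | succ n ih =>
      intro h1 h2
      rcases Nat.eq_zero_or_pos n with rfl | hn
      · rfl
      · exact (ih hn (by omega)).trans (step n hn h2)
  -- override facts
  have F1' : lt (g (v 1) (w 1)) (g (v 1) (w m)) := by
    refine sing 1 1 m h1m h1m hmm (by omega) ?_
    rw [hwD_vw_eq m v w hvw 1 h1m, hwD_vw_two m v w hvw hvinj hwinj 1 m h1m hmm (by omega)
      (by simp only [Set.mem_insert_iff, Set.mem_singleton_iff]; omega)]
    norm_num
  have F2' : lt (g (v m) (w m)) (g (v m) (w 1)) := by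
    refine sing m m 1 hmm hmm h1m (by omega) ?_
    rw [hwD_vw_eq m v w hvw m hmm, hwD_vw_two m v w hvw hvinj hwinj m 1 hmm h1m (by omega)
      (by simp only [Set.mem_insert_iff, Set.mem_singleton_iff]; omega)]
    norm_num
  have hover : inducedOp lt g ({v m, v 1} : Set 𝒱) ({w m, w 1} : Set 𝒱) = {w m} := by
    rw [← hop]
    unfold hwOp
    rw [if_pos ⟨rfl, rfl⟩]
  -- w m ∈, extract e ⪯ everything
  have hwm : w m ∈ inducedOp lt g ({v m, v 1} : Set 𝒱) ({w m, w 1} : Set 𝒱) := by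
    rw [hover]; exact rfl
  obtain ⟨-, vv, hvv, hall⟩ := (mem_ind _ _ _ _ _).mp hwm
  have hEA : lt (g (v m) (w m)) (g (v 1) (w 1)) ∨ g (v m) (w m) = g (v 1) (w 1) := by
    rcases hvv with rfl | hvv
    · exact hall (v 1) (Set.mem_insert_iff.mpr (Or.inr rfl))
        (w 1) (Set.mem_insert_iff.mpr (Or.inr rfl))
    · rw [Set.mem_singleton_iff] at hvv; subst hvv
      exact absurd F1' (fun F1'' =>
        habs _ _ (hall (v 1) (Set.mem_insert_iff.mpr (Or.inr rfl))
          (w 1) (Set.mem_insert_iff.mpr (Or.inr rfl))) F1'')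
  -- strictness: w 1 ∉
  have hstrict : lt (g (v m) (w m)) (g (v 1) (w 1)) := by
    by_contra hno
    have hAE := hnlt _ _ hno
    -- then w 1 ∈ inducedOp via v 1
    have hw1 : w 1 ∈ inducedOp lt g ({v m, v 1} : Set 𝒱) ({w m, w 1} : Set 𝒱) := by
      refine (mem_ind _ _ _ _ _).mpr ⟨Set.mem_insert_iff.mpr (Or.inr rfl), v 1,
        Set.mem_insert_iff.mpr (Or.inr rfl), ?_⟩
      intro v' hv' w' hw'
      rcases hv' with rfl | hv'
      · rcases hw' with rfl | hw'
        · -- g v1 w1 ⪯ g vm wm : this is hAE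
          exact hAE
        · rw [Set.mem_singleton_iff] at hw'; subst hw'
          -- g v1 w1 ⪯ g vm w1 : from ⪯ e and lt e c
          rcases hAE with h | h
          · exact Or.inl (htrans _ _ _ h F2')
          · exact Or.inl (h ▸ F2')
      · rw [Set.mem_singleton_iff] at hv'; subst hv'
        rcases hw' with rfl | hw'
        · exact Or.inl F1'
        · rw [Set.mem_singleton_iff] at hw'; subst hw'
          exact Or.inr rfl
    rw [hover, Set.mem_singleton_iff] at hw1
    have : 1 = m := hwinj 1 h1m m hmm hw1
    omega
  have hchain : g (v 1) (w 1) = g (v m) (w m) := chain m (by omega) (le_refl m)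
  rw [hchain] at hstrict
  exact hirr _ hstrict
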